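/- Define, for a large integer N, û_N(n,τ) = 1_{n = N e₁} 1_{[-1,1]}(τ + N²) and v̂_N(n,τ) = 1_{n = -N e₁} 1_{[-1,1]}(-τ + N²) on ℤ² × ℝ. Then the convolution giving the Fourier transform of ū_N v̄_N satisfies 𝓕(ū_N v̄_N)(n,τ) ≥ 1_{n=0} 1_{[-1,1]}(τ) pointwise. Moreover ‖u_N‖_{X^{s,b}} ∼ N^s and ‖⟨τ+|n|²⟩^{s/2+b} v̂_N(n,τ)‖_{ℓ²_n L²_τ} ∼ N^{s+2b}. -/

import Mathlib

open MeasureTheory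

noncomputable def jap (n : ℤ × ℤ) : ℝ := Real.sqrt (1 + ((n.1 : ℝ) ^ 2 + (n.2 : ℝ) ^ 2))

noncomputable def nsq (n : ℤ × ℤ) : ℝ := (n.1 : ℝ) ^ 2 + (n.2 : ℝ) ^ 2

noncomputable def jb (x : ℝ) : ℝ := Real.sqrt (1 + x ^ 2)

noncomputable def Xnorm (s b : ℝ) (u : ℤ × ℤ → ℝ → ℂ) : ℝ :=
  Real.sqrt (∑' n : ℤ × ℤ, ∫ τ : ℝ, (jap n ^ s * jb (τ + nsq n) ^ b * ‖u n τ‖) ^ 2)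

noncomputable def conjFT (u : ℤ × ℤ → ℝ → ℂ) : ℤ × ℤ → ℝ → ℂ :=
  fun n τ => starRingEnd ℂ (u (-n) (-τ))

noncomputable def conv (u v : ℤ × ℤ → ℝ → ℂ) : ℤ × ℤ → ℝ → ℂ :=
  fun n τ => ∑' n₁ : ℤ × ℤ, ∫ τ₁ : ℝ, u n₁ τ₁ * v (n - n₁) (τ - τ₁)

/-- `û_N(n,τ) = 1_{n = N e₁} 1_{[-1,1]}(τ + N²)`. -/
noncomputable def uN (N : ℕ) : ℤ × ℤ → ℝ → ℂ :=
  fun n τ => if n = ((N : ℤ), 0) then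
    ((Set.indicator (Set.Icc (-1 : ℝ) 1) (fun _ => (1 : ℝ)) (τ + (N : ℝ) ^ 2) : ℝ) : ℂ)
  else 0

/-- `v̂_N(n,τ) = 1_{n = -N e₁} 1_{[-1,1]}(-τ + N²)`. -/
noncomputable def vN (N : ℕ) : ℤ × ℤ → ℝ → ℂ :=
  fun n τ => if n = (-(N : ℤ), 0) then
    ((Set.indicator (Set.Icc (-1 : ℝ) 1) (fun _ => (1 : ℝ)) (-τ + (N : ℝ) ^ 2) : ℝ) : ℂ)
  else 0

/-! ### Auxiliary lemmas -/

lemma rpow_bound_hi {y M e : ℝ} (h1 : 1 ≤ y) (h2 : y ≤ M) : y ^ e ≤ M ^ |e| := by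
  have hy : (0:ℝ) < y := by linarith
  have hM : (0:ℝ) < M := by linarith
  rw [Real.rpow_def_of_pos hy, Real.rpow_def_of_pos hM]
  apply Real.exp_le_exp.2
  have hly : 0 ≤ Real.log y := Real.log_nonneg h1
  have hlm : Real.log y ≤ Real.log M := Real.log_le_log hy h2
  calc Real.log y * e ≤ Real.log y * |e| :=
        mul_le_mul_of_nonneg_left (le_abs_self e) hly
    _ ≤ Real.log M * |e| := mul_le_mul_of_nonneg_right hlm (abs_nonneg e)

lemma rpow_bound_lo {y M e : ℝ} (h1 : 1 ≤ y) (h2 : y ≤ M) : M ^ (-|e|) ≤ y ^ e := by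
  have hy : (0:ℝ) < y := by linarith
  have hM : (0:ℝ) < M := by linarith
  rw [Real.rpow_def_of_pos hy, Real.rpow_def_of_pos hM]
  apply Real.exp_le_exp.2
  have hly : 0 ≤ Real.log y := Real.log_nonneg h1
  have hlm : Real.log y ≤ Real.log M := Real.log_le_log hy h2
  calc Real.log M * (-|e|) ≤ Real.log y * (-|e|) := by
        apply mul_le_mul_of_nonpos_right hlm (by simp [abs_nonneg])
    _ ≤ Real.log y * e := mul_le_mul_of_nonneg_left (neg_abs_le e) hly

lemma rpow_ratio {y z M e : ℝ} (hz : 0 < z) (h1 : z ≤ y) (h2 : y ≤ M * z) :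
    M ^ (-|e|) * z ^ e ≤ y ^ e ∧ y ^ e ≤ M ^ |e| * z ^ e := by
  have hy : 0 < y := lt_of_lt_of_le hz h1
  have hd1 : 1 ≤ y / z := (one_le_div hz).2 h1
  have hd2 : y / z ≤ M := (div_le_iff₀ hz).2 h2
  have key : y ^ e = (y / z) ^ e * z ^ e := by
    rw [Real.div_rpow hy.le hz.le, div_mul_cancel₀]
    exact (Real.rpow_pos_of_pos hz e).ne'
  refine ⟨?_, ?_⟩
  · rw [key]
    exact mul_le_mul_of_nonneg_right (rpow_bound_lo hd1 hd2) (Real.rpow_pos_of_pos hz e).le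
  · rw [key]
    exact mul_le_mul_of_nonneg_right (rpow_bound_hi hd1 hd2) (Real.rpow_pos_of_pos hz e).le

lemma jb_nonneg (x : ℝ) : 0 ≤ jb x := Real.sqrt_nonneg _
lemma one_le_jb (x : ℝ) : 1 ≤ jb x := by
  rw [jb, Real.one_le_sqrt]
  nlinarith [sq_nonneg x]
lemma jb_pos (x : ℝ) : 0 < jb x := lt_of_lt_of_le one_pos (one_le_jb x)
lemma jb_le_sqrt2 {x : ℝ} (h1 : -1 ≤ x) (h2 : x ≤ 1) : jb x ≤ Real.sqrt 2 := by
  apply Real.sqrt_le_sqrt; nlinarith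
lemma jb_ge_self {x : ℝ} (h : 0 ≤ x) : x ≤ jb x := by
  rw [jb]
  nlinarith [Real.sq_sqrt (show (0:ℝ) ≤ 1 + x^2 by positivity), Real.sqrt_nonneg (1+x^2)]
lemma jb_le_one_add {x : ℝ} (h : 0 ≤ x) : jb x ≤ 1 + x := by
  rw [jb]
  have : Real.sqrt (1+x^2) ≤ Real.sqrt ((1+x)^2) := Real.sqrt_le_sqrt (by nlinarith)
  rwa [Real.sqrt_sq (by linarith)] at this
lemma jb_cont : Continuous jb := (continuous_const.add (continuous_pow 2)).sqrt

lemma jb_rpow_cont (a e : ℝ) : Continuous (fun τ : ℝ => jb (τ + a) ^ e) := by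
  apply Continuous.rpow_const (jb_cont.comp (continuous_id.add continuous_const))
  intro x
  exact Or.inl (jb_pos (x + a)).ne'

lemma setIntegral_Icc_bounds {a c m M : ℝ} (hac : a ≤ c) {f : ℝ → ℝ} (hf : Continuous f)
    (hm : ∀ x ∈ Set.Icc a c, m ≤ f x) (hM : ∀ x ∈ Set.Icc a c, f x ≤ M) :
    m * (c - a) ≤ (∫ x in Set.Icc a c, f x) ∧ (∫ x in Set.Icc a c, f x) ≤ M * (c - a) := by
  have hint : IntegrableOn f (Set.Icc a c) := hf.integrableOn_Icc
  have hvol : (volume (Set.Icc a c)).toReal = c - a := by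
    rw [Real.volume_Icc, ENNReal.toReal_ofReal (by linarith)]
  have hconst : ∀ k : ℝ, (∫ _ in Set.Icc a c, k) = k * (c - a) := by
    intro k; rw [setIntegral_const, measureReal_def, hvol, smul_eq_mul, mul_comm]
  constructor
  · rw [← hconst m]
    exact setIntegral_mono_on
      (integrableOn_const (by rw [Real.volume_Icc]; exact ENNReal.ofReal_ne_top))
      hint measurableSet_Icc hm
  · rw [← hconst M]
    exact setIntegral_mono_on hint
      (integrableOn_const (by rw [Real.volume_Icc]; exact ENNReal.ofReal_ne_top))
      measurableSet_Icc hM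

lemma sq_rpow (x e : ℝ) (hx : 0 ≤ x) : (x ^ e) ^ 2 = x ^ (e * 2) := by
  rw [← Real.rpow_natCast (x ^ e) 2, ← Real.rpow_mul hx]
  norm_num

/-- indicator notation -/
noncomputable def ind : ℝ → ℝ := Set.indicator (Set.Icc (-1 : ℝ) 1) (fun _ => (1 : ℝ))

lemma ind_nonneg (x : ℝ) : 0 ≤ ind x := Set.indicator_nonneg (fun _ _ => zero_le_one) x
lemma ind_le_one (x : ℝ) : ind x ≤ 1 := by
  unfold ind; by_cases h : x ∈ Set.Icc (-1:ℝ) 1 <;> simp [h]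

/-- Computation of the `uN` sum. -/
lemma uN_sum (s b : ℝ) (N : ℕ) :
    (∑' n : ℤ × ℤ, ∫ τ : ℝ, (jap n ^ s * jb (τ + nsq n) ^ b * ‖uN N n τ‖) ^ 2)
      = (jap ((N : ℤ), 0) ^ s) ^ 2 *
        ∫ σ in Set.Icc (-1 : ℝ) 1, jb σ ^ (b * 2) := by
  rw [tsum_eq_single ((N : ℤ), (0 : ℤ))]
  · have hnsq : nsq ((N : ℤ), 0) = (N : ℝ) ^ 2 := by simp [nsq]
    have hnorm : ∀ τ : ℝ, ‖uN N ((N : ℤ), 0) τ‖ = ind (τ + (N : ℝ) ^ 2) := by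
      intro τ
      rw [show uN N ((N:ℤ),0) τ = ((ind (τ+(N:ℝ)^2) : ℝ) : ℂ) from if_pos rfl,
        Complex.norm_real]
      exact abs_of_nonneg (ind_nonneg _)
    set A := jap ((N : ℤ), 0) ^ s with hA
    have step1 : ∀ τ : ℝ, (A * jb (τ + nsq ((N:ℤ),0)) ^ b * ‖uN N ((N:ℤ),0) τ‖) ^ 2
        = Set.indicator (Set.Icc (-1:ℝ) 1) (fun σ => A ^ 2 * jb σ ^ (b * 2)) (τ + (N:ℝ)^2) := by
      intro τ
      rw [hnsq, hnorm]
      by_cases hσ : τ + (N:ℝ)^2 ∈ Set.Icc (-1:ℝ) 1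
      · rw [Set.indicator_of_mem hσ]
        have : ind (τ + (N:ℝ)^2) = 1 := by unfold ind; rw [Set.indicator_of_mem hσ]
        rw [this, mul_one, mul_pow, sq_rpow _ _ (jb_nonneg _)]
      · rw [Set.indicator_of_notMem hσ]
        have : ind (τ + (N:ℝ)^2) = 0 := by unfold ind; rw [Set.indicator_of_notMem hσ]
        rw [this, mul_zero]
        norm_num
    simp_rw [step1]
    rw [integral_add_right_eq_self
      (fun σ => Set.indicator (Set.Icc (-1:ℝ) 1) (fun σ => A ^ 2 * jb σ ^ (b * 2)) σ) ((N:ℝ)^2),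
      integral_indicator measurableSet_Icc, integral_const_mul]
  · intro n hn
    have : ∀ τ : ℝ, uN N n τ = 0 := by intro τ; simp [uN, hn]
    simp [this]

/-- Computation of the `vN` sum. -/
lemma vN_sum (s b : ℝ) (N : ℕ) :
    (∑' n : ℤ × ℤ, ∫ τ : ℝ, (jb (τ + nsq n) ^ (s / 2 + b) * ‖vN N n τ‖) ^ 2)
      = ∫ τ in Set.Icc ((N:ℝ)^2 - 1) ((N:ℝ)^2 + 1), jb (τ + (N:ℝ)^2) ^ ((s / 2 + b) * 2) := by
  rw [tsum_eq_single ((-(N : ℤ)), (0 : ℤ))]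
  · have hnsq : nsq ((-(N : ℤ)), 0) = (N : ℝ) ^ 2 := by push_cast [nsq]; ring
    have hnorm : ∀ τ : ℝ, ‖vN N ((-(N : ℤ)), 0) τ‖ = ind (-τ + (N : ℝ) ^ 2) := by
      intro τ
      rw [show vN N ((-(N:ℤ)),0) τ = ((ind (-τ+(N:ℝ)^2) : ℝ) : ℂ) from if_pos rfl,
        Complex.norm_real]
      exact abs_of_nonneg (ind_nonneg _)
    have step1 : ∀ τ : ℝ, (jb (τ + nsq ((-(N:ℤ)),0)) ^ (s/2+b) * ‖vN N ((-(N:ℤ)),0) τ‖) ^ 2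
        = Set.indicator (Set.Icc ((N:ℝ)^2 - 1) ((N:ℝ)^2 + 1))
            (fun τ => jb (τ + (N:ℝ)^2) ^ ((s/2+b) * 2)) τ := by
      intro τ
      rw [hnsq, hnorm]
      have hmem : (-τ + (N:ℝ)^2 ∈ Set.Icc (-1:ℝ) 1) ↔
          (τ ∈ Set.Icc ((N:ℝ)^2 - 1) ((N:ℝ)^2 + 1)) := by
        simp only [Set.mem_Icc]; constructor <;> intro h <;> constructor <;> linarith [h.1, h.2]
      by_cases hτ : τ ∈ Set.Icc ((N:ℝ)^2 - 1) ((N:ℝ)^2 + 1)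
      · rw [Set.indicator_of_mem hτ]
        have : ind (-τ + (N:ℝ)^2) = 1 := by
          unfold ind; rw [Set.indicator_of_mem (hmem.2 hτ)]
        rw [this, mul_one, sq_rpow _ _ (jb_nonneg _)]
      · rw [Set.indicator_of_notMem hτ]
        have : ind (-τ + (N:ℝ)^2) = 0 := by
          unfold ind; rw [Set.indicator_of_notMem (fun h => hτ (hmem.1 h))]
        rw [this, mul_zero]
        norm_num
    simp_rw [step1]
    rw [integral_indicator measurableSet_Icc]
  · intro n hn
    have : ∀ τ : ℝ, vN N n τ = 0 := by intro τ; simp [vN, hn]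
    simp [this]

lemma conv_lower (N : ℕ) (n : ℤ × ℤ) (τ : ℝ) :
    (if n = (0, 0) then
        Set.indicator (Set.Icc (-1 : ℝ) 1) (fun _ => (1 : ℝ)) τ
      else 0)
    ≤ ‖conv (conjFT (uN N)) (conjFT (vN N)) n τ‖ := by
  by_cases hn : n = ((0:ℤ), (0:ℤ))
  · rw [if_pos hn]
    by_cases hτ : τ ∈ Set.Icc (-1:ℝ) 1
    swap
    · rw [Set.indicator_of_notMem hτ]; exact norm_nonneg _
    rw [Set.indicator_of_mem hτ]
    -- compute the convolution at (0,0)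
    subst hn
    -- the interval for the lower indicator
    set L : ℝ := (N:ℝ)^2 - 1 + max 0 τ with hL
    obtain ⟨hτ1, hτ2⟩ := hτ
    -- the real integrand
    set φ : ℝ → ℝ := fun τ₁ => ind (-τ₁ + (N:ℝ)^2) * ind (τ - τ₁ + (N:ℝ)^2) with hφ
    set S : Set ℝ := Set.Icc ((N:ℝ)^2 - 1) ((N:ℝ)^2 + 1) ∩
        Set.Icc (τ + (N:ℝ)^2 - 1) (τ + (N:ℝ)^2 + 1) with hS
    have hφeq : φ = Set.indicator S (fun _ => (1:ℝ)) := by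
      funext τ₁
      have h1 : (-τ₁ + (N:ℝ)^2 ∈ Set.Icc (-1:ℝ) 1) ↔ τ₁ ∈ Set.Icc ((N:ℝ)^2 - 1) ((N:ℝ)^2 + 1) := by
        simp only [Set.mem_Icc]; constructor <;> intro h <;> constructor <;> linarith [h.1, h.2]
      have h2 : (τ - τ₁ + (N:ℝ)^2 ∈ Set.Icc (-1:ℝ) 1) ↔
          τ₁ ∈ Set.Icc (τ + (N:ℝ)^2 - 1) (τ + (N:ℝ)^2 + 1) := by
        simp only [Set.mem_Icc]; constructor <;> intro h <;> constructor <;> linarith [h.1, h.2]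
      by_cases m1 : τ₁ ∈ Set.Icc ((N:ℝ)^2 - 1) ((N:ℝ)^2 + 1) <;>
        by_cases m2 : τ₁ ∈ Set.Icc (τ + (N:ℝ)^2 - 1) (τ + (N:ℝ)^2 + 1) <;>
        simp only [hφ, hS, ind, Set.indicator, h1, h2, Set.mem_inter_iff, m1, m2,
          if_true, if_false, and_true, and_false, true_and, false_and, mul_one, mul_zero,
          one_mul, zero_mul]
    have hSmeas : MeasurableSet S := (measurableSet_Icc.inter measurableSet_Icc)
    have hSvol : volume S < ⊤ := by
      apply lt_of_le_of_lt (measure_mono Set.inter_subset_left)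
      rw [Real.volume_Icc]; exact ENNReal.ofReal_lt_top
    have hφint : Integrable φ := by
      rw [hφeq]
      exact (integrable_indicator_iff hSmeas).2 (integrableOn_const hSvol.ne)
    -- lower function ψ
    set ψ : ℝ → ℝ := Set.indicator (Set.Icc L (L+1)) (fun _ => (1:ℝ)) with hψ
    have hsub : Set.Icc L (L+1) ⊆ S := by
      intro x hx
      obtain ⟨hx1, hx2⟩ := hx
      have hm1 : (0:ℝ) ≤ max 0 τ := le_max_left 0 τ
      have hm2 : τ ≤ max 0 τ := le_max_right 0 τ
      have hm3 : max 0 τ ≤ 1 := max_le (by linarith) hτ2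
      have hm4 : max 0 τ ≤ τ + 1 := max_le (by linarith) (by linarith)
      constructor <;> constructor <;> simp only [hL] at hx1 hx2 <;> linarith
    have hψle : ∀ x, ψ x ≤ φ x := by
      intro x
      rw [hφeq]
      exact Set.indicator_le_indicator_of_subset hsub (fun _ => zero_le_one) x
    have hψint : Integrable ψ := by
      apply (integrable_indicator_iff measurableSet_Icc).2
      refine integrableOn_const ?_
      rw [Real.volume_Icc]; exact ENNReal.ofReal_ne_top
    have hψval : (∫ x, ψ x) = 1 := by
      rw [hψ, integral_indicator measurableSet_Icc, setIntegral_const, Real.volume_real_Icc]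
      norm_num
    have hφge : (1:ℝ) ≤ ∫ x, φ x := by
      rw [← hψval]
      exact integral_mono hψint hφint hψle
    -- now identify the convolution with (∫ φ : ℂ)
    have hconv : conv (conjFT (uN N)) (conjFT (vN N)) ((0:ℤ),(0:ℤ)) τ = ((∫ x, φ x : ℝ) : ℂ) := by
      rw [conv]
      rw [tsum_eq_single ((-(N:ℤ)), (0:ℤ))]
      · have huN : ∀ τ₁ : ℝ, conjFT (uN N) ((-(N:ℤ)), 0) τ₁ = ((ind (-τ₁ + (N:ℝ)^2) : ℝ) : ℂ) := by
          intro τ₁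
          rw [conjFT]
          have : -((-(N:ℤ)), (0:ℤ)) = ((N:ℤ), (0:ℤ)) := by simp
          rw [this, show uN N ((N:ℤ),0) (-τ₁) = ((ind (-τ₁+(N:ℝ)^2) : ℝ) : ℂ) from if_pos rfl,
            Complex.conj_ofReal]
        have hvN : ∀ τ₁ : ℝ, conjFT (vN N) (((0:ℤ),(0:ℤ)) - ((-(N:ℤ)), 0)) (τ - τ₁)
            = ((ind (τ - τ₁ + (N:ℝ)^2) : ℝ) : ℂ) := by
          intro τ₁
          rw [conjFT]
          have h0 : -(((0:ℤ),(0:ℤ)) - ((-(N:ℤ)), (0:ℤ))) = ((-(N:ℤ)), (0:ℤ)) := by simp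
          rw [h0, show vN N ((-(N:ℤ)),0) (-(τ-τ₁))
              = ((Set.indicator (Set.Icc (-1:ℝ) 1) (fun _ => (1:ℝ)) (-(-(τ-τ₁)) + (N:ℝ)^2) : ℝ) : ℂ)
            from if_pos rfl, Complex.conj_ofReal]
          norm_num [ind]
        simp_rw [huN, hvN, ← Complex.ofReal_mul]
        exact integral_ofReal
      · intro n₁ hn₁
        have hz : ∀ τ₁ : ℝ, conjFT (uN N) n₁ τ₁ = 0 := by
          intro τ₁
          rw [conjFT, uN, if_neg, map_zero]
          intro h
          apply hn₁
          have : n₁ = -(((N:ℤ)), (0:ℤ)) := by rw [← h]; simp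
          simpa using this
        simp [hz]
    rw [hconv, Complex.norm_real]
    rw [Real.norm_eq_abs]
    exact le_trans hφge (le_abs_self _)
  · rw [if_neg hn]; exact norm_nonneg _


set_option maxHeartbeats 1000000 in
/-- the Example 2 computations: `𝓕(ū_N v̄_N)(n,τ) ≥ 1_{n=0}1_{[-1,1]}(τ)`
pointwise, `‖u_N‖_{X^{s,b}} ∼ N^s`, and `‖⟨τ+|n|²⟩^{s/2+b} v̂_N‖_{ℓ²L²} ∼ N^{s+2b}`. -/
theorem stmt5 (s b : ℝ) :
    ∃ c C : ℝ, 0 < c ∧ 0 < C ∧ ∀ N : ℕ, 1 ≤ N →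
      (∀ (n : ℤ × ℤ) (τ : ℝ),
        (if n = (0, 0) then
            Set.indicator (Set.Icc (-1 : ℝ) 1) (fun _ => (1 : ℝ)) τ
          else 0)
        ≤ ‖conv (conjFT (uN N)) (conjFT (vN N)) n τ‖)
      ∧ c * (N : ℝ) ^ s ≤ Xnorm s b (uN N) ∧ Xnorm s b (uN N) ≤ C * (N : ℝ) ^ s
      ∧ c * (N : ℝ) ^ (s + 2 * b)
          ≤ Real.sqrt (∑' n : ℤ × ℤ, ∫ τ : ℝ, (jb (τ + nsq n) ^ (s / 2 + b) * ‖vN N n τ‖) ^ 2)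
      ∧ Real.sqrt (∑' n : ℤ × ℤ, ∫ τ : ℝ, (jb (τ + nsq n) ^ (s / 2 + b) * ‖vN N n τ‖) ^ 2)
          ≤ C * (N : ℝ) ^ (s + 2 * b) := by
  have hs2 : (0:ℝ) < Real.sqrt 2 := Real.sqrt_pos.2 (by norm_num)
  set KsLo : ℝ := Real.sqrt 2 ^ (-|s|) with hKsLo
  set KsHi : ℝ := Real.sqrt 2 ^ |s| with hKsHi
  set KbLo : ℝ := Real.sqrt 2 ^ (-|b * 2|) with hKbLo
  set KbHi : ℝ := Real.sqrt 2 ^ |b * 2| with hKbHi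
  set KeLo : ℝ := (4:ℝ) ^ (-|(s / 2 + b) * 2|) with hKeLo
  set KeHi : ℝ := (4:ℝ) ^ |(s / 2 + b) * 2| with hKeHi
  have hKsLop : 0 < KsLo := Real.rpow_pos_of_pos hs2 _
  have hKsHip : 0 < KsHi := Real.rpow_pos_of_pos hs2 _
  have hKbLop : 0 < KbLo := Real.rpow_pos_of_pos hs2 _
  have hKbHip : 0 < KbHi := Real.rpow_pos_of_pos hs2 _
  have hKeLop : 0 < KeLo := Real.rpow_pos_of_pos (by norm_num) _
  have hKeHip : 0 < KeHi := Real.rpow_pos_of_pos (by norm_num) _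
  set cB : ℝ := Real.sqrt (KsLo ^ 2 * (KbLo * 2)) with hcB
  set CB : ℝ := Real.sqrt (KsHi ^ 2 * (KbHi * 2)) with hCB
  set cC : ℝ := Real.sqrt (KeLo * 2) with hcC
  set CC : ℝ := Real.sqrt (KeHi * 2) with hCC
  have hP1 : 0 < KsLo ^ 2 * (KbLo * 2) := mul_pos (pow_pos hKsLop 2) (mul_pos hKbLop two_pos)
  have hP2 : 0 < KsHi ^ 2 * (KbHi * 2) := mul_pos (pow_pos hKsHip 2) (mul_pos hKbHip two_pos)
  have hP3 : 0 < KeLo * 2 := mul_pos hKeLop two_pos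
  have hP4 : 0 < KeHi * 2 := mul_pos hKeHip two_pos
  have hcBp : 0 < cB := Real.sqrt_pos.2 hP1
  have hCBp : 0 < CB := Real.sqrt_pos.2 hP2
  have hcCp : 0 < cC := Real.sqrt_pos.2 hP3
  have hCCp : 0 < CC := Real.sqrt_pos.2 hP4
  refine ⟨min cB cC, max CB CC, lt_min hcBp hcCp, lt_of_lt_of_le hCBp (le_max_left _ _), ?_⟩
  intro N hN
  have hN1 : (1:ℝ) ≤ (N:ℝ) := by exact_mod_cast hN
  have hNpos : (0:ℝ) < (N:ℝ) := lt_of_lt_of_le one_pos hN1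
  have hNs : (0:ℝ) < (N:ℝ) ^ s := Real.rpow_pos_of_pos hNpos s
  have hNsb : (0:ℝ) < (N:ℝ) ^ (s + 2 * b) := Real.rpow_pos_of_pos hNpos _
  have hN2 : (1:ℝ) ≤ (N:ℝ) ^ 2 := one_le_pow₀ hN1
  -- the IB integral bounds
  have hjbcont : Continuous (fun σ : ℝ => jb σ ^ (b * 2)) :=
    Continuous.rpow_const jb_cont (fun x => Or.inl (jb_pos x).ne')
  have hIBpt : ∀ x ∈ Set.Icc (-1:ℝ) 1, KbLo ≤ jb x ^ (b * 2) ∧ jb x ^ (b * 2) ≤ KbHi := by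
    intro x hx
    have h := rpow_ratio (M := Real.sqrt 2) (e := b * 2) one_pos (one_le_jb x)
      (by rw [mul_one]; exact jb_le_sqrt2 hx.1 hx.2)
    constructor
    · have := h.1; rwa [Real.one_rpow, mul_one] at this
    · have := h.2; rwa [Real.one_rpow, mul_one] at this
  have hIB := setIntegral_Icc_bounds (by norm_num : (-1:ℝ) ≤ 1) hjbcont
      (fun x hx => (hIBpt x hx).1) (fun x hx => (hIBpt x hx).2)
  have hw1 : (1:ℝ) - (-1) = 2 := by norm_num
  rw [hw1] at hIB
  -- jap bounds
  have hjap : jap ((N:ℤ), 0) = jb (N:ℝ) := by simp [jap, jb]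
  have hA1 : (N:ℝ) ≤ jap ((N:ℤ), 0) := by
    rw [hjap]; exact jb_ge_self (by linarith only [hN1])
  have hA2 : jap ((N:ℤ), 0) ≤ Real.sqrt 2 * (N:ℝ) := by
    rw [hjap, jb]
    have h : Real.sqrt (1 + (N:ℝ)^2) ≤ Real.sqrt (2 * (N:ℝ)^2) :=
      Real.sqrt_le_sqrt (by linarith only [hN2])
    rwa [Real.sqrt_mul (by norm_num) _, Real.sqrt_sq (by linarith only [hN1])] at h
  have hAr := rpow_ratio (e := s) hNpos hA1 hA2
  set A : ℝ := jap ((N:ℤ), 0) ^ s with hA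
  have hApos : 0 < A := Real.rpow_pos_of_pos (by rw [hjap]; exact jb_pos _) s
  set IB : ℝ := ∫ σ in Set.Icc (-1:ℝ) 1, jb σ ^ (b * 2) with hIBdef
  have hXeq : Xnorm s b (uN N) = Real.sqrt (A ^ 2 * IB) := by
    rw [Xnorm, uN_sum]
  have hcb2 : cB ^ 2 = KsLo ^ 2 * (KbLo * 2) := Real.sq_sqrt hP1.le
  have hCB2 : CB ^ 2 = KsHi ^ 2 * (KbHi * 2) := Real.sq_sqrt hP2.le
  have key1 : (cB * (N:ℝ) ^ s) ^ 2 ≤ A ^ 2 * IB := by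
    have hA2' : (KsLo * (N:ℝ) ^ s) ^ 2 ≤ A ^ 2 :=
      pow_le_pow_left₀ (mul_nonneg hKsLop.le hNs.le) hAr.1 2
    calc (cB * (N:ℝ) ^ s) ^ 2 = (KsLo * (N:ℝ) ^ s) ^ 2 * (KbLo * 2) := by
          linear_combination ((N:ℝ) ^ s) ^ 2 * hcb2
      _ ≤ A ^ 2 * IB := mul_le_mul hA2' hIB.1 (mul_pos hKbLop two_pos).le (sq_nonneg A)
  have key2 : A ^ 2 * IB ≤ (CB * (N:ℝ) ^ s) ^ 2 := by
    have hA2' : A ^ 2 ≤ (KsHi * (N:ℝ) ^ s) ^ 2 :=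
      pow_le_pow_left₀ hApos.le hAr.2 2
    calc A ^ 2 * IB ≤ (KsHi * (N:ℝ) ^ s) ^ 2 * (KbHi * 2) :=
          mul_le_mul hA2' hIB.2 (le_trans (mul_pos hKbLop two_pos).le hIB.1) (sq_nonneg _)
      _ = (CB * (N:ℝ) ^ s) ^ 2 := by linear_combination (-((N:ℝ) ^ s) ^ 2) * hCB2
  -- vN part
  have hzpos : (0:ℝ) < (N:ℝ) ^ 2 := pow_pos hNpos 2
  set E : ℝ := (s / 2 + b) * 2 with hE
  have hzE : ((N:ℝ) ^ 2) ^ E = ((N:ℝ) ^ (s + 2 * b)) ^ 2 := by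
    rw [← Real.rpow_natCast (N:ℝ) 2, ← Real.rpow_mul hNpos.le,
        ← Real.rpow_natCast ((N:ℝ) ^ (s + 2 * b)) 2, ← Real.rpow_mul hNpos.le]
    congr 1
    push_cast; ring
  have hICpt : ∀ x ∈ Set.Icc ((N:ℝ)^2 - 1) ((N:ℝ)^2 + 1),
      KeLo * ((N:ℝ) ^ (s + 2*b)) ^ 2 ≤ jb (x + (N:ℝ)^2) ^ E ∧
      jb (x + (N:ℝ)^2) ^ E ≤ KeHi * ((N:ℝ) ^ (s + 2*b)) ^ 2 := by
    intro x hx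
    obtain ⟨hx1, hx2⟩ := hx
    have harg : (0:ℝ) ≤ x + (N:ℝ)^2 := by linarith only [hx1, hN2]
    have h1 : ((N:ℝ)^2) ≤ jb (x + (N:ℝ)^2) :=
      le_trans (by linarith only [hx1, hN2]) (jb_ge_self harg)
    have h2 : jb (x + (N:ℝ)^2) ≤ 4 * ((N:ℝ)^2) :=
      le_trans (jb_le_one_add harg) (by linarith only [hx2, hN2])
    have h := rpow_ratio (e := E) hzpos h1 h2
    rw [hzE] at h
    exact h
  have hIC := setIntegral_Icc_bounds
      (show (N:ℝ)^2 - 1 ≤ (N:ℝ)^2 + 1 by linarith only [])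
      (jb_rpow_cont ((N:ℝ)^2) E)
      (fun x hx => (hICpt x hx).1) (fun x hx => (hICpt x hx).2)
  have hw2 : ((N:ℝ)^2 + 1) - ((N:ℝ)^2 - 1) = 2 := by ring
  rw [hw2] at hIC
  set IC : ℝ := ∫ τ in Set.Icc ((N:ℝ)^2 - 1) ((N:ℝ)^2 + 1), jb (τ + (N:ℝ)^2) ^ E with hICdef
  have hCeq : (∑' n : ℤ × ℤ, ∫ τ : ℝ, (jb (τ + nsq n) ^ (s / 2 + b) * ‖vN N n τ‖) ^ 2) = IC :=
    vN_sum s b N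
  have hcc2 : cC ^ 2 = KeLo * 2 := Real.sq_sqrt hP3.le
  have hCC2 : CC ^ 2 = KeHi * 2 := Real.sq_sqrt hP4.le
  have key3 : (cC * (N:ℝ) ^ (s + 2*b)) ^ 2 ≤ IC := by
    calc (cC * (N:ℝ) ^ (s + 2*b)) ^ 2 = KeLo * ((N:ℝ) ^ (s + 2*b)) ^ 2 * 2 := by
          linear_combination ((N:ℝ) ^ (s + 2*b)) ^ 2 * hcc2
      _ ≤ IC := hIC.1
  have key4 : IC ≤ (CC * (N:ℝ) ^ (s + 2*b)) ^ 2 := by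
    calc IC ≤ KeHi * ((N:ℝ) ^ (s + 2*b)) ^ 2 * 2 := hIC.2
      _ = (CC * (N:ℝ) ^ (s + 2*b)) ^ 2 := by
          linear_combination (-((N:ℝ) ^ (s + 2*b)) ^ 2) * hCC2
  refine ⟨conv_lower N, ?_, ?_, ?_, ?_⟩
  · calc min cB cC * (N:ℝ) ^ s ≤ cB * (N:ℝ) ^ s :=
          mul_le_mul_of_nonneg_right (min_le_left _ _) hNs.le
      _ = Real.sqrt ((cB * (N:ℝ) ^ s) ^ 2) := (Real.sqrt_sq (mul_nonneg hcBp.le hNs.le)).symm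
      _ ≤ Real.sqrt (A ^ 2 * IB) := Real.sqrt_le_sqrt key1
      _ = Xnorm s b (uN N) := hXeq.symm
  · calc Xnorm s b (uN N) = Real.sqrt (A ^ 2 * IB) := hXeq
      _ ≤ Real.sqrt ((CB * (N:ℝ) ^ s) ^ 2) := Real.sqrt_le_sqrt key2
      _ = CB * (N:ℝ) ^ s := Real.sqrt_sq (mul_nonneg hCBp.le hNs.le)
      _ ≤ max CB CC * (N:ℝ) ^ s :=
          mul_le_mul_of_nonneg_right (le_max_left _ _) hNs.le
  · rw [hCeq]
    calc min cB cC * (N:ℝ) ^ (s + 2*b) ≤ cC * (N:ℝ) ^ (s + 2*b) :=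
          mul_le_mul_of_nonneg_right (min_le_right _ _) hNsb.le
      _ = Real.sqrt ((cC * (N:ℝ) ^ (s + 2*b)) ^ 2) := (Real.sqrt_sq (mul_nonneg hcCp.le hNsb.le)).symm
      _ ≤ Real.sqrt IC := Real.sqrt_le_sqrt key3
  · rw [hCeq]
    calc Real.sqrt IC ≤ Real.sqrt ((CC * (N:ℝ) ^ (s + 2*b)) ^ 2) := Real.sqrt_le_sqrt key4
      _ = CC * (N:ℝ) ^ (s + 2*b) := Real.sqrt_sq (mul_nonneg hCCp.le hNsb.le)
      _ ≤ max CB CC * (N:ℝ) ^ (s + 2*b) :=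
          mul_le_mul_of_nonneg_right (le_max_right _ _) hNsb.le
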